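/- Consider one step of a partitioned RK method applied to the variational system of a partitioned ODE: δ_{n+1}^{[k]} = δ_n^{[k]} + h Σ_i b_i^{[k]} m_i^{[k]} (k=1,2) with m_i^{[1]} = J_i^{11} D_i^{[1]} + J_i^{12} D_i^{[2]}, m_i^{[2]} = J_i^{21} D_i^{[1]} + J_i^{22} D_i^{[2]}, D_i^{[k]} = δ_n^{[k]} + h Σ_j a_{ij}^{[k]} m_j^{[k]}; and one step of the generalized PRK method for the adjoint: λ_{n+1}^{[1]} = λ_n^{[1]} - h Σ_i (B_i^{[11]} l_i^{[11]} + B_i^{[12]} l_i^{[12]}), λ_{n+1}^{[2]} = λ_n^{[2]} - h Σ_i (B_i^{[21]} l_i^{[21]} + B_i^{[22]} l_i^{[22]}), with l_i^{[11]} = (J_i^{11})^⊤ Λ_i^{[1]}, l_i^{[12]} = (J_i^{21})^⊤ Λ_i^{[2]}, l_i^{[21]} = (J_i^{12})^⊤ Λ_i^{[1]}, l_i^{[22]} = (J_i^{22})^⊤ Λ_i^{[2]}, Λ_i^{[1]} = λ_n^{[1]} - h Σ_j (A_{ij}^{[11]} l_j^{[11]} + A_{ij}^{[12]} l_j^{[12]}),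 Λ_i^{[2]} = λ_n^{[2]} - h Σ_j (A_{ij}^{[21]} l_j^{[21]} + A_{ij}^{[22]} l_j^{[22]}). If b_i^{[1]} = B_i^{[11]} = B_i^{[21]}, b_i^{[2]} = B_i^{[12]} = B_i^{[22]}, b_i^{[1]} A_{ij}^{[11]} + B_j^{[11]} a_{ji}^{[1]} = b_i^{[1]} B_j^{[11]}, b_i^{[1]} A_{ij}^{[12]} + B_j^{[12]} a_{ji}^{[1]} = b_i^{[1]} B_j^{[12]}, b_i^{[2]} A_{ij}^{[21]} + B_j^{[21]} a_{ji}^{[2]} = b_i^{[2]} B_j^{[21]}, and b_i^{[2]} A_{ij}^{[22]} + B_j^{[22]} a_{ji}^{[2]} = b_i^{[2]} B_j^{[22]} for all i,j, then (λ_{n+1}^{[1]})^⊤ δ_{n+1}^{[1]} + (λ_{n+1}^{[2]})^⊤ δ_{n+1}^{[2]} = (λ_n^{[1]})^⊤ δ_n^{[1]} + (λ_n^{[2]})^⊤ δ_n^{[2]}. -/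

import Mathlib

/-- Scalar bookkeeping lemma: one conjugate-pair block of the GPRK adjoint
computation. -/
lemma gprk_aux (s : ℕ) (h : ℝ) (a A1 A2 : Fin s → Fin s → ℝ) (b B1 B2 : Fin s → ℝ)
    (X1 X2 : Fin s → Fin s → ℝ) (P Q1 Q2 : Fin s → ℝ) (lamδ lamδ' : ℝ)
    (hA1 : ∀ i j, b i * A1 i j + B1 j * a j i = b i * B1 j)
    (hA2 : ∀ i j, b i * A2 i j + B2 j * a j i = b i * B2 j)
    (hexp : lamδ' = lamδ
        - h * ∑ i, (B1 i * (Q1 i - h * ∑ j, a i j * X1 i j)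
            + B2 i * (Q2 i - h * ∑ j, a i j * X2 i j))
        + h * ∑ i, b i * (P i + h * ∑ j, (A1 i j * X1 j i + A2 i j * X2 j i)
            - h * ∑ j, (B1 j * X1 j i + B2 j * X2 j i))) :
    lamδ' = lamδ + h * ∑ i, (b i * P i - B1 i * Q1 i - B2 i * Q2 i) := by
  have hu : ∑ i, (B1 i * (Q1 i - h * ∑ j, a i j * X1 i j)
        + B2 i * (Q2 i - h * ∑ j, a i j * X2 i j))
      = ∑ i, (B1 i * Q1 i + B2 i * Q2 i)
        - h * ∑ i, ∑ j, (B1 j * a j i * X1 j i + B2 j * a j i * X2 j i) := by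
    have step : ∀ i, B1 i * (Q1 i - h * ∑ j, a i j * X1 i j)
          + B2 i * (Q2 i - h * ∑ j, a i j * X2 i j)
        = (B1 i * Q1 i + B2 i * Q2 i)
          - h * ∑ j, (B1 i * a i j * X1 i j + B2 i * a i j * X2 i j) := by
      intro i
      have : ∑ j, (B1 i * a i j * X1 i j + B2 i * a i j * X2 i j)
          = B1 i * ∑ j, a i j * X1 i j + B2 i * ∑ j, a i j * X2 i j := by
        rw [Finset.sum_add_distrib, Finset.mul_sum, Finset.mul_sum]
        congr 1 <;> exact Finset.sum_congr rfl fun j _ => by ring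
      rw [this]; ring
    calc ∑ i, (B1 i * (Q1 i - h * ∑ j, a i j * X1 i j)
          + B2 i * (Q2 i - h * ∑ j, a i j * X2 i j))
        = ∑ i, ((B1 i * Q1 i + B2 i * Q2 i)
            - h * ∑ j, (B1 i * a i j * X1 i j + B2 i * a i j * X2 i j)) :=
          Finset.sum_congr rfl fun i _ => step i
      _ = ∑ i, (B1 i * Q1 i + B2 i * Q2 i)
            - ∑ i, h * ∑ j, (B1 i * a i j * X1 i j + B2 i * a i j * X2 i j) :=
          Finset.sum_sub_distrib _ _
      _ = ∑ i, (B1 i * Q1 i + B2 i * Q2 i)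
            - h * ∑ i, ∑ j, (B1 i * a i j * X1 i j + B2 i * a i j * X2 i j) := by
          rw [← Finset.mul_sum]
      _ = ∑ i, (B1 i * Q1 i + B2 i * Q2 i)
            - h * ∑ i, ∑ j, (B1 j * a j i * X1 j i + B2 j * a j i * X2 j i) := by
          conv_lhs => rw [Finset.sum_comm]
  have hv : ∑ i, b i * (P i + h * ∑ j, (A1 i j * X1 j i + A2 i j * X2 j i)
        - h * ∑ j, (B1 j * X1 j i + B2 j * X2 j i))
      = ∑ i, b i * P i
        + h * ∑ i, ∑ j, ((b i * A1 i j - b i * B1 j) * X1 j i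
            + (b i * A2 i j - b i * B2 j) * X2 j i) := by
    have step : ∀ i, b i * (P i + h * ∑ j, (A1 i j * X1 j i + A2 i j * X2 j i)
          - h * ∑ j, (B1 j * X1 j i + B2 j * X2 j i))
        = b i * P i + h * ∑ j, ((b i * A1 i j - b i * B1 j) * X1 j i
            + (b i * A2 i j - b i * B2 j) * X2 j i) := by
      intro i
      have : ∑ j, ((b i * A1 i j - b i * B1 j) * X1 j i
            + (b i * A2 i j - b i * B2 j) * X2 j i)
          = b i * ∑ j, (A1 i j * X1 j i + A2 i j * X2 j i)
            - b i * ∑ j, (B1 j * X1 j i + B2 j * X2 j i) := by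
        rw [Finset.mul_sum, Finset.mul_sum, ← Finset.sum_sub_distrib]
        exact Finset.sum_congr rfl fun j _ => by ring
      rw [this]; ring
    calc ∑ i, b i * (P i + h * ∑ j, (A1 i j * X1 j i + A2 i j * X2 j i)
          - h * ∑ j, (B1 j * X1 j i + B2 j * X2 j i))
        = ∑ i, (b i * P i + h * ∑ j, ((b i * A1 i j - b i * B1 j) * X1 j i
            + (b i * A2 i j - b i * B2 j) * X2 j i)) :=
          Finset.sum_congr rfl fun i _ => step i
      _ = ∑ i, b i * P i
            + ∑ i, h * ∑ j, ((b i * A1 i j - b i * B1 j) * X1 j i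
              + (b i * A2 i j - b i * B2 j) * X2 j i) := Finset.sum_add_distrib
      _ = ∑ i, b i * P i
            + h * ∑ i, ∑ j, ((b i * A1 i j - b i * B1 j) * X1 j i
              + (b i * A2 i j - b i * B2 j) * X2 j i) := by rw [← Finset.mul_sum]
  have hz : ∑ i, ∑ j, ((b i * A1 i j - b i * B1 j) * X1 j i
        + (b i * A2 i j - b i * B2 j) * X2 j i)
      + ∑ i, ∑ j, (B1 j * a j i * X1 j i + B2 j * a j i * X2 j i) = 0 := by
    rw [← Finset.sum_add_distrib]
    refine Finset.sum_eq_zero fun i _ => ?_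
    rw [← Finset.sum_add_distrib]
    refine Finset.sum_eq_zero fun j _ => ?_
    linear_combination X1 j i * hA1 i j + X2 j i * hA2 i j
  have hw : ∑ i, (b i * P i - B1 i * Q1 i - B2 i * Q2 i)
      = ∑ i, b i * P i - ∑ i, (B1 i * Q1 i + B2 i * Q2 i) := by
    rw [← Finset.sum_sub_distrib]
    exact Finset.sum_congr rfl fun i _ => by ring
  rw [hexp, hu, hv]
  linear_combination (-h) * hw + h ^ 2 * hz

/-- One step of a PRK method for the variational system of a partitioned ODE
together with one step of a generalized PRK (GPRK) method for the adjoint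
system, with coefficients satisfying the GPRK adjointness conditions, conserve
`(λ¹)ᵀδ¹ + (λ²)ᵀδ²`. -/
theorem gprk_adjoint_step_conserves
    (d₁ d₂ s : ℕ) (h : ℝ)
    (a1 a2 : Fin s → Fin s → ℝ) (b1 b2 : Fin s → ℝ)
    (A11 A12 A21 A22 : Fin s → Fin s → ℝ) (B11 B12 B21 B22 : Fin s → ℝ)
    (J11 : Fin s → Matrix (Fin d₁) (Fin d₁) ℝ)
    (J12 : Fin s → Matrix (Fin d₁) (Fin d₂) ℝ)
    (J21 : Fin s → Matrix (Fin d₂) (Fin d₁) ℝ)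
    (J22 : Fin s → Matrix (Fin d₂) (Fin d₂) ℝ)
    (δ1n δ1n1 lam1n lam1n1 : Fin d₁ → ℝ) (δ2n δ2n1 lam2n lam2n1 : Fin d₂ → ℝ)
    (m1 D1 : Fin s → (Fin d₁ → ℝ)) (m2 D2 : Fin s → (Fin d₂ → ℝ))
    (l11 l12 Λ1 : Fin s → (Fin d₁ → ℝ)) (l21 l22 Λ2 : Fin s → (Fin d₂ → ℝ))
    -- PRK step for the variational system
    (hδ1 : δ1n1 = δ1n + h • ∑ i, b1 i • m1 i)
    (hδ2 : δ2n1 = δ2n + h • ∑ i, b2 i • m2 i)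
    (hm1 : ∀ i, m1 i = (J11 i).mulVec (D1 i) + (J12 i).mulVec (D2 i))
    (hm2 : ∀ i, m2 i = (J21 i).mulVec (D1 i) + (J22 i).mulVec (D2 i))
    (hD1 : ∀ i, D1 i = δ1n + h • ∑ j, a1 i j • m1 j)
    (hD2 : ∀ i, D2 i = δ2n + h • ∑ j, a2 i j • m2 j)
    -- GPRK step for the adjoint system
    (hlam1 : lam1n1 = lam1n - h • ∑ i, (B11 i • l11 i + B12 i • l12 i))
    (hlam2 : lam2n1 = lam2n - h • ∑ i, (B21 i • l21 i + B22 i • l22 i))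
    (hl11 : ∀ i, l11 i = (J11 i).transpose.mulVec (Λ1 i))
    (hl12 : ∀ i, l12 i = (J21 i).transpose.mulVec (Λ2 i))
    (hl21 : ∀ i, l21 i = (J12 i).transpose.mulVec (Λ1 i))
    (hl22 : ∀ i, l22 i = (J22 i).transpose.mulVec (Λ2 i))
    (hΛ1 : ∀ i, Λ1 i = lam1n - h • ∑ j, (A11 i j • l11 j + A12 i j • l12 j))
    (hΛ2 : ∀ i, Λ2 i = lam2n - h • ∑ j, (A21 i j • l21 j + A22 i j • l22 j))
    -- GPRK adjointness conditions
    (hB1 : ∀ i, b1 i = B11 i ∧ b1 i = B21 i)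
    (hB2 : ∀ i, b2 i = B12 i ∧ b2 i = B22 i)
    (hA11 : ∀ i j, b1 i * A11 i j + B11 j * a1 j i = b1 i * B11 j)
    (hA12 : ∀ i j, b1 i * A12 i j + B12 j * a1 j i = b1 i * B12 j)
    (hA21 : ∀ i j, b2 i * A21 i j + B21 j * a2 j i = b2 i * B21 j)
    (hA22 : ∀ i j, b2 i * A22 i j + B22 j * a2 j i = b2 i * B22 j) :
    dotProduct lam1n1 δ1n1 + dotProduct lam2n1 δ2n1
      = dotProduct lam1n δ1n + dotProduct lam2n δ2n := by
  classical
  -- bilinearity helpers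
  have dpsum : ∀ {n : ℕ} (x : Fin n → ℝ) (f : Fin s → Fin n → ℝ),
      dotProduct x (∑ i, f i) = ∑ i, dotProduct x (f i) := by
    intro n x f
    simp [dotProduct, Finset.sum_apply, Finset.mul_sum]
    rw [Finset.sum_comm]
  have sumdp : ∀ {n : ℕ} (f : Fin s → Fin n → ℝ) (x : Fin n → ℝ),
      dotProduct (∑ i, f i) x = ∑ i, dotProduct (f i) x := by
    intro n f x
    simp [dotProduct, Finset.sum_apply, Finset.sum_mul]
    rw [Finset.sum_comm]
  have tr : ∀ {m n : ℕ} (M : Matrix (Fin m) (Fin n) ℝ) (x : Fin m → ℝ) (y : Fin n → ℝ),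
      dotProduct (M.transpose.mulVec x) y = dotProduct x (M.mulVec y) := by
    intro m n M x y
    rw [Matrix.mulVec_transpose, ← Matrix.dotProduct_mulVec]
  -- expansion of the updated adjoint variables
  have e1 : ∀ (x : Fin d₁ → ℝ), dotProduct lam1n1 x
      = dotProduct lam1n x
        - h * ∑ i, (B11 i * dotProduct (l11 i) x
            + B12 i * dotProduct (l12 i) x) := by
    intro x
    rw [hlam1, sub_dotProduct, smul_dotProduct, smul_eq_mul, sumdp]
    simp only [add_dotProduct, smul_dotProduct, smul_eq_mul]
  have e2 : ∀ (x : Fin d₂ → ℝ), dotProduct lam2n1 x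
      = dotProduct lam2n x
        - h * ∑ i, (B21 i * dotProduct (l21 i) x
            + B22 i * dotProduct (l22 i) x) := by
    intro x
    rw [hlam2, sub_dotProduct, smul_dotProduct, smul_eq_mul, sumdp]
    simp only [add_dotProduct, smul_dotProduct, smul_eq_mul]
  -- expansion of δ in terms of the internal stages
  have f1 : ∀ i (x : Fin d₁ → ℝ), dotProduct x δ1n
      = dotProduct x (D1 i) - h * ∑ j, a1 i j * dotProduct x (m1 j) := by
    intro i x
    have hd : δ1n = D1 i - h • ∑ j, a1 i j • m1 j := by
      rw [hD1 i, add_sub_cancel_right]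
    rw [hd, dotProduct_sub, dotProduct_smul, smul_eq_mul, dpsum]
    simp only [dotProduct_smul, smul_eq_mul]
  have f2 : ∀ i (x : Fin d₂ → ℝ), dotProduct x δ2n
      = dotProduct x (D2 i) - h * ∑ j, a2 i j * dotProduct x (m2 j) := by
    intro i x
    have hd : δ2n = D2 i - h • ∑ j, a2 i j • m2 j := by
      rw [hD2 i, add_sub_cancel_right]
    rw [hd, dotProduct_sub, dotProduct_smul, smul_eq_mul, dpsum]
    simp only [dotProduct_smul, smul_eq_mul]
  -- expansion of λ in terms of the internal stages
  have g1 : ∀ i (x : Fin d₁ → ℝ), dotProduct lam1n x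
      = dotProduct (Λ1 i) x
        + h * ∑ j, (A11 i j * dotProduct (l11 j) x
            + A12 i j * dotProduct (l12 j) x) := by
    intro i x
    have hl : lam1n = Λ1 i + h • ∑ j, (A11 i j • l11 j + A12 i j • l12 j) := by
      rw [hΛ1 i, sub_add_cancel]
    rw [hl, add_dotProduct, smul_dotProduct, smul_eq_mul, sumdp]
    simp only [add_dotProduct, smul_dotProduct, smul_eq_mul]
  have g2 : ∀ i (x : Fin d₂ → ℝ), dotProduct lam2n x
      = dotProduct (Λ2 i) x
        + h * ∑ j, (A21 i j * dotProduct (l21 j) x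
            + A22 i j * dotProduct (l22 j) x) := by
    intro i x
    have hl : lam2n = Λ2 i + h • ∑ j, (A21 i j • l21 j + A22 i j • l22 j) := by
      rw [hΛ2 i, sub_add_cancel]
    rw [hl, add_dotProduct, smul_dotProduct, smul_eq_mul, sumdp]
    simp only [add_dotProduct, smul_dotProduct, smul_eq_mul]
  -- expansion of the new pairing, block 1
  have hexp1 : dotProduct lam1n1 δ1n1
      = dotProduct lam1n δ1n
        - h * ∑ i, (B11 i * (dotProduct (l11 i) (D1 i)
              - h * ∑ j, a1 i j * dotProduct (l11 i) (m1 j))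
            + B12 i * (dotProduct (l12 i) (D1 i)
              - h * ∑ j, a1 i j * dotProduct (l12 i) (m1 j)))
        + h * ∑ i, b1 i * (dotProduct (Λ1 i) (m1 i)
            + h * ∑ j, (A11 i j * dotProduct (l11 j) (m1 i)
                + A12 i j * dotProduct (l12 j) (m1 i))
            - h * ∑ j, (B11 j * dotProduct (l11 j) (m1 i)
                + B12 j * dotProduct (l12 j) (m1 i))) := by
    have e0 : dotProduct lam1n1 δ1n1
        = dotProduct lam1n1 δ1n
          + h * ∑ i, b1 i * dotProduct lam1n1 (m1 i) := by
      rw [hδ1, dotProduct_add, dotProduct_smul, smul_eq_mul, dpsum]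
      simp only [dotProduct_smul, smul_eq_mul]
    rw [e0, e1 δ1n]
    have hS : ∑ i, (B11 i * dotProduct (l11 i) δ1n
          + B12 i * dotProduct (l12 i) δ1n)
        = ∑ i, (B11 i * (dotProduct (l11 i) (D1 i)
              - h * ∑ j, a1 i j * dotProduct (l11 i) (m1 j))
            + B12 i * (dotProduct (l12 i) (D1 i)
              - h * ∑ j, a1 i j * dotProduct (l12 i) (m1 j))) :=
      Finset.sum_congr rfl fun i _ => by rw [f1 i (l11 i), f1 i (l12 i)]
    have hT : ∑ i, b1 i * dotProduct lam1n1 (m1 i)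
        = ∑ i, b1 i * (dotProduct (Λ1 i) (m1 i)
            + h * ∑ j, (A11 i j * dotProduct (l11 j) (m1 i)
                + A12 i j * dotProduct (l12 j) (m1 i))
            - h * ∑ j, (B11 j * dotProduct (l11 j) (m1 i)
                + B12 j * dotProduct (l12 j) (m1 i))) :=
      Finset.sum_congr rfl fun i _ => by rw [e1 (m1 i), g1 i (m1 i)]
    rw [hS, hT]
  -- expansion of the new pairing, block 2
  have hexp2 : dotProduct lam2n1 δ2n1
      = dotProduct lam2n δ2n
        - h * ∑ i, (B21 i * (dotProduct (l21 i) (D2 i)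
              - h * ∑ j, a2 i j * dotProduct (l21 i) (m2 j))
            + B22 i * (dotProduct (l22 i) (D2 i)
              - h * ∑ j, a2 i j * dotProduct (l22 i) (m2 j)))
        + h * ∑ i, b2 i * (dotProduct (Λ2 i) (m2 i)
            + h * ∑ j, (A21 i j * dotProduct (l21 j) (m2 i)
                + A22 i j * dotProduct (l22 j) (m2 i))
            - h * ∑ j, (B21 j * dotProduct (l21 j) (m2 i)
                + B22 j * dotProduct (l22 j) (m2 i))) := by
    have e0 : dotProduct lam2n1 δ2n1
        = dotProduct lam2n1 δ2n
          + h * ∑ i, b2 i * dotProduct lam2n1 (m2 i) := by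
      rw [hδ2, dotProduct_add, dotProduct_smul, smul_eq_mul, dpsum]
      simp only [dotProduct_smul, smul_eq_mul]
    rw [e0, e2 δ2n]
    have hS : ∑ i, (B21 i * dotProduct (l21 i) δ2n
          + B22 i * dotProduct (l22 i) δ2n)
        = ∑ i, (B21 i * (dotProduct (l21 i) (D2 i)
              - h * ∑ j, a2 i j * dotProduct (l21 i) (m2 j))
            + B22 i * (dotProduct (l22 i) (D2 i)
              - h * ∑ j, a2 i j * dotProduct (l22 i) (m2 j))) :=
      Finset.sum_congr rfl fun i _ => by rw [f2 i (l21 i), f2 i (l22 i)]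
    have hT : ∑ i, b2 i * dotProduct lam2n1 (m2 i)
        = ∑ i, b2 i * (dotProduct (Λ2 i) (m2 i)
            + h * ∑ j, (A21 i j * dotProduct (l21 j) (m2 i)
                + A22 i j * dotProduct (l22 j) (m2 i))
            - h * ∑ j, (B21 j * dotProduct (l21 j) (m2 i)
                + B22 j * dotProduct (l22 j) (m2 i))) :=
      Finset.sum_congr rfl fun i _ => by rw [e2 (m2 i), g2 i (m2 i)]
    rw [hS, hT]
  -- apply the bookkeeping lemma to each block
  have key1 : dotProduct lam1n1 δ1n1
      = dotProduct lam1n δ1n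
        + h * ∑ i, (b1 i * dotProduct (Λ1 i) (m1 i)
            - B11 i * dotProduct (l11 i) (D1 i)
            - B12 i * dotProduct (l12 i) (D1 i)) :=
    gprk_aux s h a1 A11 A12 b1 B11 B12
      (fun i j => dotProduct (l11 i) (m1 j))
      (fun i j => dotProduct (l12 i) (m1 j))
      (fun i => dotProduct (Λ1 i) (m1 i))
      (fun i => dotProduct (l11 i) (D1 i))
      (fun i => dotProduct (l12 i) (D1 i))
      _ _ hA11 hA12 hexp1
  have key2 : dotProduct lam2n1 δ2n1
      = dotProduct lam2n δ2n
        + h * ∑ i, (b2 i * dotProduct (Λ2 i) (m2 i)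
            - B21 i * dotProduct (l21 i) (D2 i)
            - B22 i * dotProduct (l22 i) (D2 i)) :=
    gprk_aux s h a2 A21 A22 b2 B21 B22
      (fun i j => dotProduct (l21 i) (m2 j))
      (fun i j => dotProduct (l22 i) (m2 j))
      (fun i => dotProduct (Λ2 i) (m2 i))
      (fun i => dotProduct (l21 i) (D2 i))
      (fun i => dotProduct (l22 i) (D2 i))
      _ _ hA21 hA22 hexp2
  -- the stage contributions cancel pairwise
  have hstage : ∀ i, (b1 i * dotProduct (Λ1 i) (m1 i)
        - B11 i * dotProduct (l11 i) (D1 i)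
        - B12 i * dotProduct (l12 i) (D1 i))
      + (b2 i * dotProduct (Λ2 i) (m2 i)
        - B21 i * dotProduct (l21 i) (D2 i)
        - B22 i * dotProduct (l22 i) (D2 i)) = 0 := by
    intro i
    obtain ⟨hb11, hb21⟩ := hB1 i
    obtain ⟨hb12, hb22⟩ := hB2 i
    rw [hm1 i, hm2 i, hl11 i, hl12 i, hl21 i, hl22 i,
      dotProduct_add, dotProduct_add, tr, tr, tr, tr,
      ← hb11, ← hb21, ← hb12, ← hb22]
    ring
  have hz : ∑ i, (b1 i * dotProduct (Λ1 i) (m1 i)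
        - B11 i * dotProduct (l11 i) (D1 i)
        - B12 i * dotProduct (l12 i) (D1 i))
      + ∑ i, (b2 i * dotProduct (Λ2 i) (m2 i)
        - B21 i * dotProduct (l21 i) (D2 i)
        - B22 i * dotProduct (l22 i) (D2 i)) = 0 := by
    rw [← Finset.sum_add_distrib]
    exact Finset.sum_eq_zero fun i _ => hstage i
  rw [key1, key2]
  linear_combination h * hz
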